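/- Let n, d ∈ ℕ and let α₁, …, α_n ∈ ℤ satisfy α₁ ∣ α₂, α₂ ∣ α₃, …, α_{n−1} ∣ α_n. Let N := Span_ℤ{α₁·e₁, …, α_n·e_n} ⊆ ℤ^n, where (e₁, …, e_n) is the standard basis. Then there exists a ℤ-linear map ψ : ℤ^n → ℤ^d with ψ(N) = ℤ^d if and only if d ≤ #{ i ∈ {1, …, n} : α_i = 1 or α_i = −1 }. -/

import Mathlib

/-- Let `α₁ ∣ α₂ ∣ ⋯ ∣ α_n` in `ℤ` and let
`N = Span_ℤ{α₁·e₁, …, α_n·e_n} ⊆ ℤ^n`.  Then there is a `ℤ`-linear map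
`ψ : ℤ^n → ℤ^d` with `ψ(N) = ℤ^d` if and only if
`d ≤ #{i : α_i = 1 or α_i = -1}`. -/
theorem stmt_12 (n d : ℕ) (α : Fin n → ℤ)
    (hchain : ∀ (i : ℕ) (h : i + 1 < n), α ⟨i, Nat.lt_of_succ_lt h⟩ ∣ α ⟨i + 1, h⟩) :
    (∃ ψ : (Fin n → ℤ) →ₗ[ℤ] (Fin d → ℤ),
        Submodule.map ψ (Submodule.span ℤ
          (Set.range fun i : Fin n => α i • (Pi.single i 1 : Fin n → ℤ))) = ⊤) ↔
      d ≤ (Finset.univ.filter fun i : Fin n => α i = 1 ∨ α i = -1).card := by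
  classical
  set s : Finset (Fin n) := Finset.univ.filter fun i : Fin n => α i = 1 ∨ α i = -1 with hs
  set g : Fin n → (Fin n → ℤ) := fun i => α i • (Pi.single i 1 : Fin n → ℤ) with hg
  -- divisibility is monotone along the chain
  have hmono : ∀ i j : Fin n, i ≤ j → α i ∣ α j := by
    have key : ∀ (j : ℕ) (hj : j < n) (i : ℕ) (hi : i ≤ j),
        α ⟨i, lt_of_le_of_lt hi hj⟩ ∣ α ⟨j, hj⟩ := by
      intro j
      induction j with
      | zero => intro hj i hi; interval_cases i; exact dvd_refl _
      | succ m ih =>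
        intro hj i hi
        rcases Nat.lt_or_ge i (m + 1) with h | h
        · exact dvd_trans (ih (Nat.lt_of_succ_lt hj) i (Nat.lt_succ_iff.mp h))
            (hchain m hj)
        · have : i = m + 1 := le_antisymm hi h
          subst this; exact dvd_refl _
    intro i j hij
    have := key j.1 j.2 i.1 hij
    simpa using this
  constructor
  · rintro ⟨ψ, hψ⟩
    by_contra hd
    push_neg at hd
    -- find a prime dividing all non-unit entries
    obtain ⟨p, hp, hpd⟩ : ∃ p : ℕ, p.Prime ∧ ∀ i : Fin n, i ∉ s → (p : ℤ) ∣ α i := by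
      by_cases hne : ∃ i : Fin n, i ∉ s
      · set T : Finset (Fin n) := Finset.univ.filter fun i => i ∉ s with hT
        have hTne : T.Nonempty := by
          obtain ⟨i, hi⟩ := hne
          exact ⟨i, by simp [hT, hi]⟩
        set m : Fin n := T.min' hTne with hm
        have hmT : m ∈ T := T.min'_mem hTne
        have hms : m ∉ s := by simpa [hT] using hmT
        have hne1 : (α m).natAbs ≠ 1 := by
          intro h
          rcases Int.natAbs_eq_iff.mp h with h1 | h1 <;>
            simp [hs, h1] at hms
        obtain ⟨p, hp, hpdvd⟩ := Nat.exists_prime_and_dvd hne1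
        refine ⟨p, hp, fun i hi => ?_⟩
        have hmi : m ≤ i := T.min'_le i (by simp [hT, hi])
        have h1 : (p : ℤ) ∣ α m := by
          have := Int.ofNat_dvd.mpr hpdvd
          exact dvd_trans this (Int.natAbs_dvd.mpr dvd_rfl)
        exact dvd_trans h1 (hmono m i hmi)
      · push_neg at hne
        exact ⟨2, Nat.prime_two, fun i hi => absurd (hne i) hi⟩
    haveI : Fact p.Prime := ⟨hp⟩
    -- reduce modulo p
    set F : (Fin d → ℤ) →ₗ[ℤ] (Fin d → ZMod p) :=
      LinearMap.compLeft (Algebra.linearMap ℤ (ZMod p)) (Fin d) with hF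
    have hFsurj : Function.Surjective F := by
      intro y
      refine ⟨fun i => ((y i).val : ℤ), funext fun i => ?_⟩
      show algebraMap ℤ (ZMod p) (((y i).val : ℤ)) = y i
      simp [hF, LinearMap.compLeft, ZMod.natCast_val, ZMod.intCast_cast,
        ZMod.intCast_zmod_cast]
    set h : Fin n → (Fin d → ZMod p) := fun i => F (ψ (g i)) with hh
    have hspan : Submodule.span ℤ (Set.range h) = ⊤ := by
      have h1 : Submodule.map F (Submodule.map ψ (Submodule.span ℤ (Set.range g))) = ⊤ := by
        rw [hψ, Submodule.map_top, LinearMap.range_eq_top]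
        exact hFsurj
      rw [Submodule.map_span, Submodule.map_span, ← Set.range_comp, ← Set.range_comp] at h1
      exact h1
    have hspanP : Submodule.span (ZMod p) (Set.range h) = ⊤ := by
      have h2 := Submodule.span_le_restrictScalars ℤ (ZMod p) (Set.range h)
      rw [hspan, top_le_iff, Submodule.restrictScalars_eq_top_iff] at h2
      exact h2
    -- generators outside s vanish
    have hzero : ∀ i : Fin n, i ∉ s → h i = 0 := by
      intro i hi
      have hα : ((α i : ℤ) : ZMod p) = 0 :=
        (ZMod.intCast_zmod_eq_zero_iff_dvd _ _).mpr (hpd i hi)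
      have h1 : h i = (α i) • F (ψ (Pi.single i 1)) := by
        show F (ψ (α i • (Pi.single i 1 : Fin n → ℤ))) = _
        rw [map_smul, map_smul]
      rw [h1, ← Int.cast_smul_eq_zsmul (ZMod p), hα, zero_smul]
    have hsub : Set.range h ⊆ insert (0 : Fin d → ZMod p) (h '' ↑s) := by
      rintro - ⟨i, rfl⟩
      by_cases hi : i ∈ s
      · exact Set.mem_insert_iff.mpr (Or.inr ⟨i, hi, rfl⟩)
      · exact Set.mem_insert_iff.mpr (Or.inl (hzero i hi))
    have hspan2 : Submodule.span (ZMod p) (↑(s.image h) : Set (Fin d → ZMod p)) = ⊤ := by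
      rw [eq_top_iff, ← hspanP]
      refine Submodule.span_le.mpr fun x hx => ?_
      rcases hsub hx with h0 | hx'
      · rw [h0]; exact Submodule.zero_mem _
      · obtain ⟨i, hi, rfl⟩ := hx'
        exact Submodule.subset_span (by simpa using ⟨i, hi, rfl⟩)
    have hfr : d ≤ (s.image h).card := by
      have h1 := finrank_span_finset_le_card (R := ZMod p) (s.image h)
      rw [Set.finrank, hspan2, finrank_top] at h1
      simpa [Module.finrank_fin_fun] using h1
    have h2 : (s.image h).card ≤ s.card := Finset.card_image_le
    omega
  · intro hd
    -- pick d distinct unit indices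
    set e := s.orderIsoOfFin rfl with he
    set f : Fin d → Fin n := fun j => (e (Fin.castLE hd j) : Fin n) with hf
    have hfs : ∀ j, f j ∈ s := fun j => (e (Fin.castLE hd j)).2
    have hfinj : Function.Injective f := by
      intro a b hab
      have := e.injective (Subtype.ext hab)
      exact Fin.castLE_injective hd this
    refine ⟨LinearMap.pi fun j : Fin d => LinearMap.proj (f j), ?_⟩
    set ψ : (Fin n → ℤ) →ₗ[ℤ] (Fin d → ℤ) :=
      LinearMap.pi fun j : Fin d => LinearMap.proj (f j) with hψ
    have hψapp : ∀ (x : Fin n → ℤ) (j : Fin d), ψ x j = x (f j) := fun x j => rfl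
    rw [eq_top_iff]
    intro x _
    have hxsum : x = ∑ j : Fin d, x j • (Pi.single j 1 : Fin d → ℤ) := by
      funext j'
      simp [Pi.single_apply, Finset.sum_apply, mul_ite]
    rw [hxsum]
    refine Submodule.sum_mem _ fun j _ => Submodule.smul_mem _ _ ?_
    -- single j 1 is in the image
    have hgin : g (f j) ∈ Submodule.span ℤ (Set.range g) :=
      Submodule.subset_span ⟨f j, rfl⟩
    have hψg : ψ (g (f j)) = α (f j) • (Pi.single j 1 : Fin d → ℤ) := by
      funext j'
      rw [hψapp]
      by_cases hjj : j' = j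
      · subst hjj; simp [hg]
      · have : f j' ≠ f j := fun hc => hjj (hfinj hc)
        simp [hg, Pi.single_apply, this, hjj]
    have hu : α (f j) = 1 ∨ α (f j) = -1 := by
      have := hfs j
      simpa [hs] using this
    have hmem : ψ (g (f j)) ∈ Submodule.map ψ (Submodule.span ℤ (Set.range g)) :=
      Submodule.mem_map_of_mem hgin
    have : (Pi.single j 1 : Fin d → ℤ) = α (f j) • ψ (g (f j)) := by
      rw [hψg, smul_smul]
      rcases hu with h1 | h1 <;> simp [h1]
    rw [this]
    exact Submodule.smul_mem _ _ hmem
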